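/- Let m = 2n, ε = (ε_1,...,ε_m) be i.i.d. uniform ±1 signs, and t(ε) a uniformly random element of the set of balanced sign vectors (equal numbers of +1 and −1) closest to ε in Hamming distance. Then for every coordinate q ∈ {1,...,m}, E[ε_q | t(ε)] = (1 − 2^{−m} · binom(m, n)) · t_q(ε). -/

import Mathlib

open Finset
open scoped Classical

/-- Sign vectors on `Fin m` with exactly `n` coordinates equal to `+1`
(encoded as `true`). -/
noncomputable def balanced (m n : ℕ) : Finset (Fin m → Bool) :=
  Finset.univ.filter fun v => (Finset.univ.filter fun i => v i = true).card = n

/-- Hamming distance between two sign vectors. -/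
def hamm {m : ℕ} (v w : Fin m → Bool) : ℕ :=
  (Finset.univ.filter fun i => v i ≠ w i).card

/-- `Tset m n v`: the balanced sign vectors at minimal Hamming distance
from `v`. -/
noncomputable def Tset (m n : ℕ) (v : Fin m → Bool) : Finset (Fin m → Bool) :=
  (balanced m n).filter fun w => ∀ w' ∈ balanced m n, hamm v w ≤ hamm v w'

/-- Real-valued sign of a Boolean sign: `+1` for `true`, `−1` for `false`. -/
def bsgn (b : Bool) : ℝ := if b then 1 else -1



noncomputable def ones {m : ℕ} (v : Fin m → Bool) : Finset (Fin m) :=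
  univ.filter fun i => v i = true

lemma mem_balanced {m n : ℕ} {v : Fin m → Bool} :
    v ∈ balanced m n ↔ (ones v).card = n := by
  simp [balanced, ones]

lemma ones_inj {m : ℕ} {v w : Fin m → Bool} (h : ones v = ones w) : v = w := by
  funext i
  have hi := Finset.ext_iff.mp h i
  simp only [ones, mem_filter, mem_univ, true_and] at hi
  cases hv : v i <;> cases hw : w i <;> simp [hv, hw] at hi ⊢

lemma ones_decide {m : ℕ} (s : Finset (Fin m)) :
    ones (fun i => decide (i ∈ s)) = s := by
  ext i; simp [ones]

lemma hamm_eq_card {m : ℕ} (v w : Fin m → Bool) :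
    hamm v w = (ones v \ ones w).card + (ones w \ ones v).card := by
  have hdisj : Disjoint (ones v \ ones w) (ones w \ ones v) :=
    disjoint_sdiff_sdiff
  rw [← card_union_of_disjoint hdisj]
  unfold hamm
  congr 1
  ext i
  simp only [mem_filter, mem_univ, true_and, mem_union, mem_sdiff, ones]
  cases hv : v i <;> cases hw : w i <;> simp [hv, hw]

lemma card_le_of_hamm {m : ℕ} (v w : Fin m → Bool) :
    (ones w).card ≤ (ones v).card + hamm v w := by
  rw [hamm_eq_card]
  calc (ones w).card ≤ (ones v ∪ (ones w \ ones v)).card := by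
        apply card_le_card
        intro i hi
        simp only [mem_union, mem_sdiff]
        by_cases h : i ∈ ones v
        · exact Or.inl h
        · exact Or.inr ⟨hi, h⟩
    _ ≤ (ones v).card + (ones w \ ones v).card := card_union_le _ _
    _ ≤ _ := by omega

lemma hamm_subset {m : ℕ} {v w : Fin m → Bool} (h : ones w ⊆ ones v) :
    hamm v w = (ones v).card - (ones w).card := by
  rw [hamm_eq_card, Finset.sdiff_eq_empty_iff_subset.mpr h, card_empty,
    card_sdiff_of_subset h, Nat.add_zero]

lemma hamm_comm {m : ℕ} (v w : Fin m → Bool) : hamm v w = hamm w v := by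
  unfold hamm; congr 1; ext i; simp [ne_comm]



section char
variable {n m : ℕ} {e ε : Fin m → Bool}

lemma exists_bal_subset (hn : n ≤ (ones (m := m) ε).card) :
    ∃ w ∈ balanced m n, ones w ⊆ ones ε ∧ hamm ε w = (ones ε).card - n := by
  obtain ⟨s, hs, hcard⟩ := Finset.exists_subset_card_eq hn
  refine ⟨fun i => decide (i ∈ s), ?_, ?_, ?_⟩
  · rw [mem_balanced, ones_decide, hcard]
  · rw [ones_decide]; exact hs
  · rw [hamm_subset (by rw [ones_decide]; exact hs), ones_decide, hcard]

lemma exists_bal_superset (hm : m = 2*n) (hk : (ones (m := m) ε).card ≤ n) :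
    ∃ w ∈ balanced m n, ones ε ⊆ ones w ∧ hamm ε w = n - (ones ε).card := by
  obtain ⟨s, hs1, _, hcard⟩ := Finset.exists_subsuperset_card_eq (Finset.subset_univ (ones ε)) hk
    (by rw [Finset.card_univ, Fintype.card_fin]; omega)
  refine ⟨fun i => decide (i ∈ s), ?_, ?_, ?_⟩
  · rw [mem_balanced, ones_decide, hcard]
  · rw [ones_decide]; exact hs1
  · rw [hamm_comm, hamm_subset (by rw [ones_decide]; exact hs1), ones_decide, hcard]

lemma hamm_arith (v w : Fin m → Bool) :
    (ones v).card + (ones w \ ones v).card = (ones w).card + (ones v \ ones w).card ∧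
    hamm v w = (ones v \ ones w).card + (ones w \ ones v).card := by
  constructor
  · have h1 : (ones v \ ones w).card + (ones v ∩ ones w).card = (ones v).card :=
      Finset.card_sdiff_add_card_inter _ _
    have h2 : (ones w \ ones v).card + (ones w ∩ ones v).card = (ones w).card :=
      Finset.card_sdiff_add_card_inter _ _
    rw [Finset.inter_comm] at h2
    omega
  · exact hamm_eq_card v w

lemma mem_Tset_iff (hm : m = 2*n) (he : e ∈ balanced m n) :
    e ∈ Tset m n ε ↔ (ones e ⊆ ones ε ∨ ones ε ⊆ ones e) := by
  have hecard : (ones e).card = n := mem_balanced.mp he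
  obtain ⟨harith, hh⟩ := hamm_arith ε e
  constructor
  · intro hT
    rw [Tset, mem_filter] at hT
    obtain ⟨_, hmin⟩ := hT
    rcases le_total n (ones ε).card with hk | hk
    · obtain ⟨w, hwb, _, hww⟩ := exists_bal_subset hk
      have hle : hamm ε e ≤ (ones ε).card - n := hww ▸ hmin w hwb
      left
      have h0 : (ones e \ ones ε).card = 0 := by omega
      rw [Finset.card_eq_zero, Finset.sdiff_eq_empty_iff_subset] at h0
      exact h0
    · obtain ⟨w, hwb, _, hww⟩ := exists_bal_superset hm hk
      have hle : hamm ε e ≤ n - (ones ε).card := hww ▸ hmin w hwb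
      right
      have h0 : (ones ε \ ones e).card = 0 := by omega
      rw [Finset.card_eq_zero, Finset.sdiff_eq_empty_iff_subset] at h0
      exact h0
  · intro hsub
    rw [Tset, mem_filter]
    refine ⟨he, fun w' hw' => ?_⟩
    have hw'card : (ones w').card = n := mem_balanced.mp hw'
    have hlb := card_le_of_hamm ε w'
    have hlb2 := card_le_of_hamm w' ε
    rw [hamm_comm w' ε] at hlb2
    rcases hsub with hsub | hsub
    · have heq : hamm ε e = (ones ε).card - n := by
        rw [hamm_subset hsub, hecard]
      omega
    · have heq : hamm ε e = n - (ones ε).card := by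
        rw [hamm_comm, hamm_subset hsub, hecard]
      omega

lemma Tset_eq_of_superset (hm : m = 2*n) (he : e ∈ balanced m n)
    (hsub : ones e ⊆ ones ε) :
    Tset m n ε = (balanced m n).filter fun w => ones w ⊆ ones ε := by
  have hecard : (ones e).card = n := mem_balanced.mp he
  have hk : n ≤ (ones ε).card := hecard ▸ Finset.card_le_card hsub
  ext w
  rw [Tset, mem_filter, mem_filter]
  constructor
  · rintro ⟨hwb, hmin⟩
    refine ⟨hwb, ?_⟩
    have hwcard : (ones w).card = n := mem_balanced.mp hwb
    have hle : hamm ε w ≤ (ones ε).card - n := by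
      have h1 : hamm ε e = (ones ε).card - n := by
        rw [hamm_subset hsub, hecard]
      exact h1 ▸ hmin e he
    obtain ⟨harith, hh⟩ := hamm_arith ε w
    have h0 : (ones w \ ones ε).card = 0 := by omega
    rw [Finset.card_eq_zero, Finset.sdiff_eq_empty_iff_subset] at h0
    exact h0
  · rintro ⟨hwb, hsub'⟩
    refine ⟨hwb, fun w' hw' => ?_⟩
    have hwcard : (ones w).card = n := mem_balanced.mp hwb
    have hw'card : (ones w').card = n := mem_balanced.mp hw'
    have h1 : hamm ε w = (ones ε).card - n := by
      rw [hamm_subset hsub', hwcard]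
    have hlb := card_le_of_hamm w' ε
    rw [hamm_comm w' ε] at hlb
    omega

lemma Tset_card_of_superset (hm : m = 2*n) (he : e ∈ balanced m n)
    (hsub : ones e ⊆ ones ε) :
    (Tset m n ε).card = ((ones ε).card).choose n := by
  rw [Tset_eq_of_superset hm he hsub, ← Finset.card_powersetCard]
  apply Finset.card_bij (fun w _ => ones w)
  · intro w hw
    rw [mem_filter] at hw
    rw [Finset.mem_powersetCard]
    exact ⟨hw.2, mem_balanced.mp hw.1⟩
  · intro w₁ h₁ w₂ h₂ h
    exact ones_inj h
  · intro s hs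
    rw [Finset.mem_powersetCard] at hs
    refine ⟨fun i => decide (i ∈ s), ?_, ones_decide s⟩
    rw [mem_filter, mem_balanced, ones_decide]
    exact ⟨hs.2, hs.1⟩

end char



section neg
variable {n m : ℕ} {e ε v w : Fin m → Bool}

def negv {m : ℕ} (v : Fin m → Bool) : Fin m → Bool := fun i => !(v i)

@[simp] lemma negv_negv (v : Fin m → Bool) : negv (negv v) = v := by
  funext i; simp [negv]

lemma ones_negv (v : Fin m → Bool) : ones (negv v) = (ones v)ᶜ := by
  ext i; simp [ones, negv]

lemma negv_balanced (hm : m = 2*n) : negv v ∈ balanced m n ↔ v ∈ balanced m n := by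
  rw [mem_balanced, mem_balanced, ones_negv, Finset.card_compl, Fintype.card_fin]
  constructor
  · intro h
    have hle : (ones v).card ≤ m := by
      simpa using Finset.card_le_card (Finset.subset_univ (ones v))
    omega
  · intro h; omega

lemma hamm_negv : hamm (negv v) (negv w) = hamm v w := by
  unfold hamm negv; congr 1; ext i
  cases hv : v i <;> cases hw : w i <;> simp [hv, hw]

lemma mem_Tset_negv (hm : m = 2*n) : negv w ∈ Tset m n (negv ε) ↔ w ∈ Tset m n ε := by
  rw [Tset, Tset, mem_filter, mem_filter, negv_balanced hm]
  apply and_congr_right'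
  constructor
  · intro h w' hw'
    have := h (negv w') ((negv_balanced hm).mpr hw')
    rwa [hamm_negv, hamm_negv] at this
  · intro h w' hw'
    have h2 := h (negv w') ((negv_balanced hm).mp (by rwa [negv_negv]))
    have : hamm (negv ε) (negv w) ≤ hamm (negv ε) (negv (negv w')) := by
      rwa [hamm_negv, hamm_negv]
    rwa [negv_negv] at this

lemma Tset_negv (hm : m = 2*n) : Tset m n (negv ε) = (Tset m n ε).image negv := by
  ext w
  rw [Finset.mem_image]
  constructor
  · intro h
    refine ⟨negv w, ?_, by simp⟩
    rw [← mem_Tset_negv hm, negv_negv]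
    exact h
  · rintro ⟨x, hx, rfl⟩
    exact (mem_Tset_negv hm).mpr hx

lemma Tset_negv_card (hm : m = 2*n) :
    (Tset m n (negv ε)).card = (Tset m n ε).card := by
  rw [Tset_negv hm]
  exact Finset.card_image_of_injective _ (fun a b h => by
    have := congrArg negv h; simpa using this)

end neg



section updown
variable {n m : ℕ} {e ε : Fin m → Bool} {S : Finset (Fin m)}

def upv {m : ℕ} (e : Fin m → Bool) (S : Finset (Fin m)) : Fin m → Bool :=
  fun i => e i || decide (i ∈ S)

def downv {m : ℕ} (e : Fin m → Bool) (S : Finset (Fin m)) : Fin m → Bool :=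
  fun i => e i && !decide (i ∈ S)

lemma ones_upv : ones (upv e S) = ones e ∪ S := by
  ext i; simp [ones, upv]

lemma ones_downv : ones (downv e S) = ones e \ S := by
  ext i; simp [ones, downv]

lemma negv_downv : negv (downv e S) = upv (negv e) S := by
  funext i; simp [negv, downv, upv]

lemma card_ones_upv (hS : S ⊆ (ones e)ᶜ) :
    (ones (upv e S)).card = (ones e).card + S.card := by
  rw [ones_upv, Finset.card_union_of_disjoint]
  exact Finset.disjoint_left.mpr fun a hae haS => by
    have := hS haS; simp at this; exact this hae

lemma upv_sdiff (hS : S ⊆ (ones e)ᶜ) : ones (upv e S) \ ones e = S := by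
  rw [ones_upv, Finset.union_sdiff_cancel_left]
  exact Finset.disjoint_left.mpr fun a hae haS => by
    have := hS haS; simp at this; exact this hae

lemma downv_sdiff (hS : S ⊆ ones e) : ones e \ ones (downv e S) = S := by
  rw [ones_downv, Finset.sdiff_sdiff_self_left, Finset.inter_eq_right.mpr hS]

lemma upv_recover (hsub : ones e ⊆ ones ε) : upv e (ones ε \ ones e) = ε := by
  funext i
  by_cases hi : e i = true
  · have hεi : ε i = true := by
      have hmem : i ∈ ones e := by simp [ones, hi]
      have := hsub hmem
      simpa [ones] using this
    simp [upv, hi, hεi]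
  · simp only [Bool.not_eq_true] at hi
    cases hε : ε i <;> simp [upv, hi, hε, ones]

lemma downv_recover (hsub : ones ε ⊆ ones e) : downv e (ones e \ ones ε) = ε := by
  funext i
  by_cases hi : ε i = true
  · have he_i : e i = true := by
      have hmem : i ∈ ones ε := by simp [ones, hi]
      have := hsub hmem
      simpa [ones] using this
    simp [downv, hi, he_i, ones]
  · simp only [Bool.not_eq_true] at hi
    cases he_i : e i <;> simp [downv, hi, he_i, ones]

end updown

section split
variable {n m : ℕ} {e : Fin m → Bool}

lemma sum_split (hm : m = 2*n) (he : e ∈ balanced m n) (f : (Fin m → Bool) → ℝ) :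
    ∑ ε : Fin m → Bool, (if e ∈ Tset m n ε then f ε else 0)
      = ((∑ S ∈ (ones e)ᶜ.powerset, f (upv e S))
          + ∑ S ∈ (ones e).powerset, f (downv e S)) - f e := by
  classical
  set A : Finset (Fin m → Bool) := univ.filter (fun ε => ones e ⊆ ones ε) with hA
  set B : Finset (Fin m → Bool) := univ.filter (fun ε => ones ε ⊆ ones e) with hB
  have hfilter : univ.filter (fun ε => e ∈ Tset m n ε) = A ∪ B := by
    ext ε
    simp only [hA, hB, mem_union, mem_filter, mem_univ, true_and]
    exact mem_Tset_iff hm he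
  have h1 : ∑ ε : Fin m → Bool, (if e ∈ Tset m n ε then f ε else 0)
      = ∑ ε ∈ A ∪ B, f ε := by
    rw [← hfilter, Finset.sum_filter]
  have hAB : A ∩ B = {e} := by
    ext ε
    simp only [hA, hB, mem_inter, mem_filter, mem_univ, true_and, mem_singleton]
    constructor
    · rintro ⟨h1', h2'⟩
      exact (ones_inj (Finset.Subset.antisymm h2' h1')).symm ▸ rfl
    · rintro rfl
      exact ⟨Finset.Subset.refl _, Finset.Subset.refl _⟩
  have h2 : ((∑ ε ∈ A ∪ B, f ε) + ∑ ε ∈ A ∩ B, f ε) = (∑ ε ∈ A, f ε) + ∑ ε ∈ B, f ε :=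
    Finset.sum_union_inter
  rw [hAB, Finset.sum_singleton] at h2
  have hAsum : ∑ ε ∈ A, f ε = ∑ S ∈ (ones e)ᶜ.powerset, f (upv e S) := by
    apply Finset.sum_nbij' (fun ε => ones ε \ ones e) (fun S => upv e S)
    · intro ε hε
      rw [hA, mem_filter] at hε
      rw [Finset.mem_powerset]
      intro i hi
      rw [Finset.mem_sdiff] at hi
      simpa using hi.2
    · intro S hS
      rw [Finset.mem_powerset] at hS
      rw [hA, mem_filter]
      refine ⟨mem_univ _, ?_⟩
      rw [ones_upv]
      exact Finset.subset_union_left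
    · intro ε hε
      rw [hA, mem_filter] at hε
      exact upv_recover hε.2
    · intro S hS
      rw [Finset.mem_powerset] at hS
      exact upv_sdiff hS
    · intro ε hε
      rw [hA, mem_filter] at hε
      rw [upv_recover hε.2]
  have hBsum : ∑ ε ∈ B, f ε = ∑ S ∈ (ones e).powerset, f (downv e S) := by
    apply Finset.sum_nbij' (fun ε => ones e \ ones ε) (fun S => downv e S)
    · intro ε hε
      rw [Finset.mem_powerset]
      exact Finset.sdiff_subset
    · intro S hS
      rw [Finset.mem_powerset] at hS
      rw [hB, mem_filter]
      refine ⟨mem_univ _, ?_⟩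
      rw [ones_downv]
      exact Finset.sdiff_subset
    · intro ε hε
      rw [hB, mem_filter] at hε
      exact downv_recover hε.2
    · intro S hS
      rw [Finset.mem_powerset] at hS
      exact downv_sdiff hS
    · intro ε hε
      rw [hB, mem_filter] at hε
      rw [downv_recover hε.2]
  rw [h1, ← hAsum, ← hBsum]
  linarith [h2]

end split



section tsetvals
variable {n m : ℕ} {e : Fin m → Bool} {S : Finset (Fin m)}

lemma mem_Tset_upv (hm : m = 2*n) (he : e ∈ balanced m n) :
    e ∈ Tset m n (upv e S) := by
  rw [mem_Tset_iff hm he]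
  left
  rw [ones_upv]
  exact Finset.subset_union_left

lemma mem_Tset_downv (hm : m = 2*n) (he : e ∈ balanced m n) :
    e ∈ Tset m n (downv e S) := by
  rw [mem_Tset_iff hm he]
  right
  rw [ones_downv]
  exact Finset.sdiff_subset

lemma card_Tset_upv (hm : m = 2*n) (he : e ∈ balanced m n) (hS : S ⊆ (ones e)ᶜ) :
    (Tset m n (upv e S)).card = (n + S.card).choose n := by
  rw [Tset_card_of_superset hm he (by rw [ones_upv]; exact Finset.subset_union_left),
    card_ones_upv hS, mem_balanced.mp he]

lemma card_Tset_downv (hm : m = 2*n) (he : e ∈ balanced m n) (hS : S ⊆ ones e) :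
    (Tset m n (downv e S)).card = (n + S.card).choose n := by
  have hne : negv e ∈ balanced m n := by
    rw [negv_balanced hm]; exact he
  have hSc : S ⊆ (ones (negv e))ᶜ := by
    rw [ones_negv, compl_compl]; exact hS
  rw [← Tset_negv_card (ε := downv e S) hm, negv_downv]
  rw [Tset_card_of_superset hm hne (by rw [ones_upv]; exact Finset.subset_union_left),
    card_ones_upv hSc, mem_balanced.mp hne]

end tsetvals






-- trinomial revision instance: C(n,j) * C(2n,n) = C(2n,n+j) * C(n+j,n)
lemma trinom (n j : ℕ) (hj : j ≤ n) :
    n.choose j * (2*n).choose n = (2*n).choose (n+j) * (n+j).choose n := by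
  have h1 : n + j ≤ 2 * n := by omega
  have key : (n.choose j * (2*n).choose n) * (j.factorial * (n-j).factorial * (n.factorial * n.factorial))
      = ((2*n).choose (n+j) * (n+j).choose n) * (j.factorial * (n-j).factorial * (n.factorial * n.factorial)) := by
    have e1 : n.choose j * j.factorial * (n-j).factorial = n.factorial :=
      Nat.choose_mul_factorial_mul_factorial hj
    have e2 : (2*n).choose n * n.factorial * (2*n-n).factorial = (2*n).factorial :=
      Nat.choose_mul_factorial_mul_factorial (by omega)
    have e3 : (2*n).choose (n+j) * (n+j).factorial * (2*n-(n+j)).factorial = (2*n).factorial :=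
      Nat.choose_mul_factorial_mul_factorial h1
    have e4 : (n+j).choose n * n.factorial * ((n+j)-n).factorial = (n+j).factorial :=
      Nat.choose_mul_factorial_mul_factorial (by omega)
    have h2 : 2*n - n = n := by omega
    have h3 : 2*n - (n+j) = n - j := by omega
    have h4 : (n+j) - n = j := by omega
    rw [h2] at e2; rw [h3] at e3; rw [h4] at e4
    calc n.choose j * (2*n).choose n * (j.factorial * (n-j).factorial * (n.factorial * n.factorial))
        = (n.choose j * j.factorial * (n-j).factorial) * ((2*n).choose n * n.factorial * n.factorial) := by ring
      _ = n.factorial * (2*n).factorial := by rw [e1, e2]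
      _ = ((2*n).choose (n+j) * (n+j).factorial * (n-j).factorial) * n.factorial := by rw [e3]; ring
      _ = ((2*n).choose (n+j) * ((n+j).choose n * n.factorial * j.factorial) * (n-j).factorial) * n.factorial := by rw [e4]
      _ = (2*n).choose (n+j) * (n+j).choose n * (j.factorial * (n-j).factorial * (n.factorial * n.factorial)) := by ring
  exact Nat.eq_of_mul_eq_mul_right (by positivity) key

-- 2 * Σ_{j=0}^{n} C(2n, n+j) = 4^n + C(2n,n)
lemma sum_upper (n : ℕ) :
    2 * (∑ j ∈ range (n+1), (2*n).choose (n+j)) = 4^n + (2*n).choose n := by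
  have htot : ∑ k ∈ range (2*n+1), (2*n).choose k = 4^n := by
    rw [Nat.sum_range_choose]
    rw [show (4:ℕ) = 2^2 by norm_num, ← pow_mul]
  have hsplit : ∑ k ∈ range (2*n+1), (2*n).choose k
      = (∑ k ∈ range n, (2*n).choose k) + ∑ j ∈ range (n+1), (2*n).choose (n+j) := by
    have := Finset.sum_range_add (fun k => (2*n).choose k) n (n+1)
    rw [show n + (n+1) = 2*n+1 by omega] at this
    exact this
  have hrefl : ∑ k ∈ range n, (2*n).choose k = ∑ j ∈ range n, (2*n).choose (n+1+j) := by
    rw [← Finset.sum_range_reflect (fun j => (2*n).choose (n+1+j)) n]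
    apply Finset.sum_congr rfl
    intro k hk
    rw [mem_range] at hk
    rw [show n+1+(n-1-k) = 2*n - k by omega, Nat.choose_symm (by omega)]
  have hsucc : ∑ j ∈ range (n+1), (2*n).choose (n+j)
      = (2*n).choose n + ∑ j ∈ range n, (2*n).choose (n+1+j) := by
    rw [Finset.sum_range_succ' (fun j => (2*n).choose (n+j)) n]
    simp [add_comm]
    apply Finset.sum_congr rfl
    intro k _
    congr 1
    omega
  omega

-- Σ_{j=0}^{n} 2j * C(2n, n+j) = n * C(2n,n)   (in ℝ)
lemma sum_weighted (n : ℕ) (hn : 0 < n) :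
    ∑ j ∈ range (n+1), (2*(j:ℝ)) * (2*n).choose (n+j) = n * (2*n).choose n := by
  have key : ∀ i ∈ range n, (2*((i:ℝ)+1)) * (2*n).choose (n+i+1)
      = 2*n * ((((2*n-1).choose (n+i) : ℕ) : ℝ) - (((2*n-1).choose (n+i+1) : ℕ) : ℝ)) := by
    intro i hi
    rw [mem_range] at hi
    have hA : 2*n * (2*n-1).choose (n+i) = (2*n).choose (n+i+1) * (n+i+1) := by
      have h := Nat.add_one_mul_choose_eq (2*n-1) (n+i)
      rw [show 2*n-1+1 = 2*n by omega] at h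
      exact h
    have hB : 2*n * (2*n-1).choose (n+i+1) = (2*n).choose (n+i+1) * (n-(i+1)) := by
      have h1 := Nat.add_one_mul_choose_eq (2*n-1) (n+i+1)
      rw [show 2*n-1+1 = 2*n by omega] at h1
      have h2 := Nat.choose_succ_right_eq (2*n) (n+i+1)
      rw [show 2*n - (n+i+1) = n - (i+1) by omega] at h2
      rw [h1, show n+i+1+1 = n+i+2 from rfl, h2]
    have hA' : (2*(n:ℝ)) * (2*n-1).choose (n+i) = ((2*n).choose (n+i+1) : ℝ) * ((n:ℝ)+i+1) := by
      exact_mod_cast congrArg (Nat.cast : ℕ → ℝ) hA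
    have hB' : (2*(n:ℝ)) * (2*n-1).choose (n+i+1) = ((2*n).choose (n+i+1) : ℝ) * ((n:ℝ)-(i+1)) := by
      have := congrArg (Nat.cast : ℕ → ℝ) hB
      push_cast [Nat.cast_sub (by omega : i+1 ≤ n)] at this
      push_cast
      linarith [this]
    rw [mul_sub, hA', hB']; ring
  rw [Finset.sum_range_succ' (fun j => (2*(j:ℝ)) * (2*n).choose (n+j)) n]
  simp only [Nat.cast_zero, Nat.cast_add, Nat.cast_one]
  have congrstep : ∀ i ∈ range n, (2*((i:ℝ)+1)) * (2*n).choose (n+(i+1))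
      = 2*(n:ℝ) * ((fun k => (((2*n-1).choose (n+k) : ℕ) : ℝ)) i - (fun k => (((2*n-1).choose (n+k) : ℕ) : ℝ)) (i+1)) := by
    intro i hi
    simpa [show n+(i+1) = n+i+1 by omega] using key i hi
  rw [Finset.sum_congr rfl congrstep, ← Finset.mul_sum, Finset.sum_range_sub']
  have hz : (2*n-1).choose (n+n) = 0 := Nat.choose_eq_zero_of_lt (by omega)
  have hsym : (2*n-1).choose (n-1) = (2*n-1).choose n :=
    Nat.choose_symm_of_eq_add (by omega)
  have hC : (2*n).choose n = (2*n-1).choose (n-1) + (2*n-1).choose n := by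
    have h := Nat.choose_succ_succ (2*n-1) (n-1)
    simp only [Nat.succ_eq_add_one] at h
    rw [show (2*n-1)+1 = 2*n by omega, show (n-1)+1 = n by omega] at h
    exact h
  rw [hsym] at hC
  have hC' : ((2*n).choose n : ℝ) = 2 * (2*n-1).choose n := by
    rw [hC]; push_cast; ring
  simp only [Nat.add_zero, hz, Nat.cast_zero, sub_zero]
  rw [hC']
  ring

section realids

lemma cR_pos (n j : ℕ) : (0:ℝ) < ((n+j).choose n : ℝ) := by
  exact_mod_cast Nat.choose_pos (Nat.le_add_right n j)

lemma central_pos (n : ℕ) : (0:ℝ) < ((2*n).choose n : ℝ) := by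
  exact_mod_cast Nat.choose_pos (by omega)

lemma ratio_eq (n : ℕ) {j : ℕ} (hj : j ≤ n) :
    (n.choose j : ℝ) / ((n+j).choose n : ℝ)
      = ((2*n).choose (n+j) : ℝ) / ((2*n).choose n : ℝ) := by
  rw [div_eq_div_iff (cR_pos n j).ne' (central_pos n).ne']
  exact_mod_cast trinom n j hj

lemma Ssum (n : ℕ) :
    ∑ j ∈ range (n+1), (n.choose j : ℝ) / ((n+j).choose n : ℝ)
      = ((4:ℝ)^n + (2*n).choose n) / (2 * (2*n).choose n) := by
  have h1 : ∀ j ∈ range (n+1), (n.choose j : ℝ) / ((n+j).choose n : ℝ)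
      = ((2*n).choose (n+j) : ℝ) / ((2*n).choose n : ℝ) := by
    intro j hj
    exact ratio_eq n (by rw [mem_range] at hj; omega)
  rw [Finset.sum_congr rfl h1, ← Finset.sum_div]
  have h2 : (∑ j ∈ range (n+1), ((2*n).choose (n+j) : ℝ))
      = ((4:ℝ)^n + (2*n).choose n) / 2 := by
    have := congrArg (Nat.cast : ℕ → ℝ) (sum_upper n)
    push_cast at this
    linarith
  rw [h2, div_div]

lemma IIsum (n : ℕ) (hn : 0 < n) :
    ∑ j ∈ range n, ((n-1).choose j : ℝ) / ((n+(j+1)).choose n : ℝ) = 1/2 := by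
  have key : ∀ j ∈ range n, ((n-1).choose j : ℝ) / ((n+(j+1)).choose n : ℝ)
      = (2*((j:ℝ)+1) * ((2*n).choose (n+(j+1)) : ℝ)) / (2 * n * ((2*n).choose n : ℝ)) := by
    intro j hj
    rw [mem_range] at hj
    have hmul : n * (n-1).choose j = n.choose (j+1) * (j+1) := by
      have h := Nat.add_one_mul_choose_eq (n-1) j
      rw [show n-1+1 = n by omega] at h
      exact h
    have hmul' : (n:ℝ) * ((n-1).choose j : ℝ) = (n.choose (j+1) : ℝ) * ((j:ℝ)+1) := by
      exact_mod_cast congrArg (Nat.cast : ℕ → ℝ) hmul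
    have hr := ratio_eq n (show j+1 ≤ n by omega)
    have hcpos := cR_pos n (j+1)
    have hCpos := central_pos n
    have hnpos : (0:ℝ) < n := by exact_mod_cast hn
    rw [div_eq_div_iff hcpos.ne' (by positivity)] at hr ⊢
    nlinarith [hr, hmul']
  rw [Finset.sum_congr rfl key, ← Finset.sum_div]
  have h2 : (∑ j ∈ range n, 2*((j:ℝ)+1) * ((2*n).choose (n+(j+1)) : ℝ))
      = n * ((2*n).choose n : ℝ) := by
    have hw := sum_weighted n hn
    rw [Finset.sum_range_succ' (fun j => (2*(j:ℝ)) * ((2*n).choose (n+j):ℝ)) n] at hw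
    simp only [Nat.cast_add, Nat.cast_one, Nat.cast_zero, mul_zero, zero_mul,
      add_zero, Nat.add_zero] at hw
    exact hw
  rw [h2]
  have hCpos := central_pos n
  have hnpos : (0:ℝ) < n := by exact_mod_cast hn
  rw [div_eq_div_iff (by positivity) (by positivity)]
  ring

end realids



lemma upv_empty {m : ℕ} (e : Fin m → Bool) : upv e ∅ = e := by
  funext i; simp [upv]

lemma card_Tset_self {n m : ℕ} {e : Fin m → Bool} (hm : m = 2*n) (he : e ∈ balanced m n) :
    (Tset m n e).card = 1 := by
  have h := card_Tset_upv (S := ∅) hm he (Finset.empty_subset _)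
  rw [upv_empty] at h
  simpa using h

lemma main_true (n : ℕ) (hn : 0 < n) (m : ℕ)
    (hm : m = 2 * n) (q : Fin m) (e : Fin m → Bool) (he : e ∈ balanced m n)
    (hq : e q = true) :
    (∑ ε : Fin m → Bool,
        if e ∈ Tset m n ε then bsgn (ε q) / (Tset m n ε).card else 0) /
      (∑ ε : Fin m → Bool,
        if e ∈ Tset m n ε then (1 : ℝ) / (Tset m n ε).card else 0)
      = (1 - (m.choose n : ℝ) / 2 ^ m) * bsgn (e q) := by
  classical
  have hecard : (ones e).card = n := mem_balanced.mp he
  have hcompl : ((ones e)ᶜ).card = n := by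
    rw [Finset.card_compl, Fintype.card_fin, hecard]; omega
  have hqe : q ∈ ones e := by simp [ones, hq]
  have herase : ((ones e).erase q).card = n - 1 := by
    rw [Finset.card_erase_of_mem hqe, hecard]
  have hTe : ((Tset m n e).card : ℝ) = 1 := by
    rw [card_Tset_self hm he]; norm_num
  set Sig0 : ℝ := ∑ j ∈ range (n+1), (n.choose j : ℝ) / ((n+j).choose n : ℝ) with hSig0
  -- the common A-side / B-side sums for the denominator
  have hA : ∑ S ∈ (ones e)ᶜ.powerset, (1:ℝ)/((Tset m n (upv e S)).card) = Sig0 := by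
    have h1 : ∀ S ∈ (ones e)ᶜ.powerset, (1:ℝ)/((Tset m n (upv e S)).card)
        = (fun j => 1/((((n+j).choose n : ℕ)) : ℝ)) S.card := by
      intro S hS
      rw [card_Tset_upv hm he (Finset.mem_powerset.mp hS)]
    rw [Finset.sum_congr rfl h1,
      Finset.sum_powerset_apply_card (fun j => 1/((((n+j).choose n : ℕ)) : ℝ)), hcompl]
    apply Finset.sum_congr rfl
    intro j hj
    rw [nsmul_eq_mul, mul_one_div]
  have hB : ∑ S ∈ (ones e).powerset, (1:ℝ)/((Tset m n (downv e S)).card) = Sig0 := by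
    have h1 : ∀ S ∈ (ones e).powerset, (1:ℝ)/((Tset m n (downv e S)).card)
        = (fun j => 1/((((n+j).choose n : ℕ)) : ℝ)) S.card := by
      intro S hS
      rw [card_Tset_downv hm he (Finset.mem_powerset.mp hS)]
    rw [Finset.sum_congr rfl h1,
      Finset.sum_powerset_apply_card (fun j => 1/((((n+j).choose n : ℕ)) : ℝ)), hecard]
    apply Finset.sum_congr rfl
    intro j hj
    rw [nsmul_eq_mul, mul_one_div]
  have hden : (∑ ε : Fin m → Bool,
      if e ∈ Tset m n ε then (1 : ℝ) / (Tset m n ε).card else 0) = 2 * Sig0 - 1 := by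
    rw [sum_split hm he (fun ε => (1:ℝ)/((Tset m n ε).card))]
    rw [hA, hB, hTe]
    ring
  -- numerator
  set P : ℝ := ∑ T ∈ ((ones e).erase q).powerset, (1:ℝ)/(((n+T.card).choose n : ℕ) : ℝ) with hP
  set Q : ℝ := ∑ T ∈ ((ones e).erase q).powerset, (1:ℝ)/(((n+(T.card+1)).choose n : ℕ) : ℝ) with hQ
  have hins : ones e = insert q ((ones e).erase q) := (Finset.insert_erase hqe).symm
  have hQval : Q = 1/2 := by
    rw [hQ, Finset.sum_powerset_apply_card (fun j => (1:ℝ)/(((n+(j+1)).choose n : ℕ) : ℝ)), herase]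
    rw [show n - 1 + 1 = n by omega]
    rw [← IIsum n hn]
    apply Finset.sum_congr rfl
    intro j hj
    rw [nsmul_eq_mul, mul_one_div]
  have hPQ : P + Q = Sig0 := by
    have hb2 : ∑ S ∈ (ones e).powerset, (1:ℝ)/(((n+S.card).choose n : ℕ) : ℝ) = Sig0 := by
      rw [Finset.sum_powerset_apply_card (fun j => (1:ℝ)/((((n+j).choose n : ℕ)) : ℝ)), hecard]
      apply Finset.sum_congr rfl
      intro j hj
      rw [nsmul_eq_mul, mul_one_div]
    rw [← hb2]
    conv_rhs => rw [hins]
    rw [Finset.sum_powerset_insert (Finset.notMem_erase q _)]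
    congr 1
    apply Finset.sum_congr rfl
    intro T hT
    rw [Finset.card_insert_of_notMem
      (fun hqT => Finset.notMem_erase q (ones e) (Finset.mem_powerset.mp hT hqT))]
  have hnum : (∑ ε : Fin m → Bool,
      if e ∈ Tset m n ε then bsgn (ε q) / (Tset m n ε).card else 0) = 2 * Sig0 - 2 := by
    rw [sum_split hm he (fun ε => bsgn (ε q)/((Tset m n ε).card))]
    have hAn : ∑ S ∈ (ones e)ᶜ.powerset, bsgn (upv e S q)/((Tset m n (upv e S)).card) = Sig0 := by
      rw [← hA]
      apply Finset.sum_congr rfl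
      intro S hS
      have : upv e S q = true := by simp [upv, hq]
      rw [this]
      rw [bsgn]
      norm_num
    have hBn : ∑ S ∈ (ones e).powerset, bsgn (downv e S q)/((Tset m n (downv e S)).card)
        = P - Q := by
      conv_lhs => rw [hins]
      rw [Finset.sum_powerset_insert (Finset.notMem_erase q _)]
      have h1 : ∑ T ∈ ((ones e).erase q).powerset,
          bsgn (downv e T q)/((Tset m n (downv e T)).card) = P := by
        rw [hP]
        apply Finset.sum_congr rfl
        intro T hT
        have hqT : q ∉ T := fun hqT => Finset.notMem_erase q (ones e)
          (Finset.mem_powerset.mp hT hqT)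
        have hsgn : downv e T q = true := by simp [downv, hq, hqT]
        have hsub : T ⊆ ones e := (Finset.mem_powerset.mp hT).trans (Finset.erase_subset _ _)
        rw [hsgn, card_Tset_downv hm he hsub, bsgn]
        norm_num
      have h2 : ∑ T ∈ ((ones e).erase q).powerset,
          bsgn (downv e (insert q T) q)/((Tset m n (downv e (insert q T))).card) = -Q := by
        rw [hQ, ← Finset.sum_neg_distrib]
        apply Finset.sum_congr rfl
        intro T hT
        have hqT : q ∉ T := fun hqT => Finset.notMem_erase q (ones e)
          (Finset.mem_powerset.mp hT hqT)
        have hsgn : downv e (insert q T) q = false := by simp [downv]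
        have hsub : insert q T ⊆ ones e := by
          rw [hins]
          exact Finset.insert_subset_insert q (Finset.mem_powerset.mp hT)
        rw [hsgn, card_Tset_downv hm he hsub,
          Finset.card_insert_of_notMem hqT, bsgn]
        simp [neg_div]
      rw [h1, h2]
      ring
    rw [hAn, hBn, hTe, hq, bsgn]
    norm_num
    rw [← hPQ, hQval]
    ring
  rw [hnum, hden]
  have hSval : Sig0 = ((4:ℝ)^n + (2*n).choose n) / (2 * (2*n).choose n) := Ssum n
  have hCpos := central_pos n
  have h4pos : (0:ℝ) < 4^n := by positivity
  have hrhs1 : (m.choose n : ℝ) = ((2*n).choose n : ℝ) := by rw [hm]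
  have hrhs2 : (2:ℝ)^m = 4^n := by
    rw [hm, pow_mul]; norm_num
  rw [hrhs1, hrhs2, hq, bsgn, if_pos rfl, mul_one]
  have h1 : 2*Sig0 - 1 = (4:ℝ)^n / ((2*n).choose n : ℝ) := by
    rw [hSval]; field_simp; ring
  have h2 : 2*Sig0 - 2 = ((4:ℝ)^n - ((2*n).choose n : ℝ)) / ((2*n).choose n : ℝ) := by
    rw [hSval]; field_simp; ring
  rw [h1, h2, div_div_div_cancel_right₀ hCpos.ne' _ _]
  rw [div_eq_iff h4pos.ne', sub_mul, one_mul, div_mul_cancel₀ _ h4pos.ne']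



/-- Coupling expectation lemma: for every coordinate `q`,
`E[ε_q | t(ε)] = (1 − 2^{−m} C(m,n)) · t_q(ε)`, stated as a conditional
expectation given `t(ε) = e` for every balanced `e`. -/
theorem coupling_cond_expectation (n : ℕ) (hn : 0 < n) (m : ℕ)
    (hm : m = 2 * n) (q : Fin m) (e : Fin m → Bool) (he : e ∈ balanced m n) :
    (∑ ε : Fin m → Bool,
        if e ∈ Tset m n ε then bsgn (ε q) / (Tset m n ε).card else 0) /
      (∑ ε : Fin m → Bool,
        if e ∈ Tset m n ε then (1 : ℝ) / (Tset m n ε).card else 0)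
      = (1 - (m.choose n : ℝ) / 2 ^ m) * bsgn (e q) := by
  classical
  cases hq : e q with
  | true =>
    have h := main_true n hn m hm q e he hq
    rwa [hq] at h
  | false =>
    have hne : negv e ∈ balanced m n := by rw [negv_balanced hm]; exact he
    have hnq : negv e q = true := by simp [negv, hq]
    have hmain := main_true n hn m hm q (negv e) hne hnq
    rw [hnq] at hmain
    have hbij : Function.Bijective (negv : (Fin m → Bool) → (Fin m → Bool)) :=
      Function.Involutive.bijective (fun v => negv_negv v)
    have hmemiff : ∀ ε : Fin m → Bool, (e ∈ Tset m n (negv ε)) ↔ (negv e ∈ Tset m n ε) := by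
      intro ε
      constructor
      · intro h
        rw [← mem_Tset_negv hm (w := negv e), negv_negv]
        exact h
      · intro h
        rw [show e = negv (negv e) from (negv_negv e).symm]
        rw [mem_Tset_negv hm]
        exact h
    have hmemiff2 : ∀ ε : Fin m → Bool, (negv e ∈ Tset m n (negv ε)) ↔ (e ∈ Tset m n ε) := by
      intro ε
      have h := hmemiff (negv ε)
      rw [negv_negv] at h
      exact h.symm
    have hNum : (∑ ε : Fin m → Bool,
          if e ∈ Tset m n ε then bsgn (ε q) / (Tset m n ε).card else 0)
        = - ∑ ε : Fin m → Bool,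
            (if negv e ∈ Tset m n ε then bsgn (ε q) / (Tset m n ε).card else 0) := by
      rw [← Finset.sum_neg_distrib]
      apply Fintype.sum_bijective negv hbij
      intro ε
      by_cases h : e ∈ Tset m n ε
      · rw [if_pos h, if_pos ((hmemiff2 ε).mpr h)]
        rw [Tset_negv_card hm]
        have hsgn : bsgn (negv ε q) = - bsgn (ε q) := by
          cases hεq : ε q <;> simp [negv, bsgn, hεq]
        rw [hsgn, neg_div, neg_neg]
      · rw [if_neg h, if_neg (fun hc => h ((hmemiff2 ε).mp hc)), neg_zero]
    have hDen : (∑ ε : Fin m → Bool,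
          if e ∈ Tset m n ε then (1:ℝ) / (Tset m n ε).card else 0)
        = ∑ ε : Fin m → Bool,
            (if negv e ∈ Tset m n ε then (1:ℝ) / (Tset m n ε).card else 0) := by
      apply Fintype.sum_bijective negv hbij
      intro ε
      by_cases h : e ∈ Tset m n ε
      · rw [if_pos h, if_pos ((hmemiff2 ε).mpr h), Tset_negv_card hm]
      · rw [if_neg h, if_neg (fun hc => h ((hmemiff2 ε).mp hc))]
    rw [hNum, hDen, neg_div, hmain]
    simp [bsgn]
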